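/- For fixed η ∈ (0,1) and N_S > 0, the partial derivative with respect to ξ of the zero-temperature single-mode QFI I(ξ) satisfies (∂_ξ I)(ξ) = 4N_S(√N_S η²/√ξ + O(1)) as ξ → 0⁺; in particular ∂_ξ I(ξ) → +∞ as ξ → 0⁺, so ξ = 0 (the coherent state) cannot be a maximizer of I on [0,1] for any η > 0. -/

import Mathlib

noncomputable def I0 (η NS ξ : ℝ) : ℝ :=
  4*NS*((1-ξ) / (1 - 2*η^2*(Real.sqrt (ξ*NS*(1+ξ*NS)) - ξ*NS))
    + ξ*((1-η^2)^2 + η^4) / ((1-η^2)*(1 + 2*ξ*NS*η^2*(1-η^2))))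

namespace CSNO

noncomputable def Dd (η NS ξ : ℝ) : ℝ := 1 - 2*η^2*(Real.sqrt (ξ*NS*(1+ξ*NS)) - ξ*NS)
noncomputable def Ee (η NS ξ : ℝ) : ℝ := (1-η^2)*(1 + 2*ξ*NS*η^2*(1-η^2))
noncomputable def Dd' (η NS ξ : ℝ) : ℝ :=
  -((NS*(1+2*ξ*NS)/(2*Real.sqrt (ξ*NS*(1+ξ*NS))) - NS)*(2*η^2))
noncomputable def Ee' (η NS : ℝ) : ℝ := (1-η^2)*(2*NS*η^2*(1-η^2))
noncomputable def Aa (η : ℝ) : ℝ := (1-η^2)^2 + η^4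
noncomputable def dI (η NS ξ : ℝ) : ℝ :=
  4*NS*( ((-1)*Dd η NS ξ - (1-ξ)*Dd' η NS ξ)/(Dd η NS ξ)^2
    + ((Aa η)*Ee η NS ξ - ξ*(Aa η)*Ee' η NS)/(Ee η NS ξ)^2 )

variable {η NS ξ : ℝ}

lemma sqrt_lb (hNS : 0 < NS) (hξ : 0 ≤ ξ) : ξ*NS ≤ Real.sqrt (ξ*NS*(1+ξ*NS)) := by
  have h0 : 0 ≤ ξ*NS := by positivity
  have h1 : (ξ*NS)^2 ≤ ξ*NS*(1+ξ*NS) := by nlinarith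
  calc ξ*NS = Real.sqrt ((ξ*NS)^2) := by rw [Real.sqrt_sq h0]
    _ ≤ _ := Real.sqrt_le_sqrt h1

lemma sqrt_ub_half (hNS : 0 < NS) (hξ : 0 ≤ ξ) :
    Real.sqrt (ξ*NS*(1+ξ*NS)) ≤ ξ*NS + 1/2 := by
  have h0 : 0 ≤ ξ*NS := by positivity
  have h1 : ξ*NS*(1+ξ*NS) ≤ (ξ*NS + 1/2)^2 := by nlinarith
  calc Real.sqrt (ξ*NS*(1+ξ*NS)) ≤ Real.sqrt ((ξ*NS+1/2)^2) := Real.sqrt_le_sqrt h1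
    _ = ξ*NS + 1/2 := Real.sqrt_sq (by positivity)

lemma sqrt_ub_sqrt (hNS : 0 < NS) (hξ : 0 ≤ ξ) :
    Real.sqrt (ξ*NS*(1+ξ*NS)) ≤ ξ*NS + Real.sqrt ξ * Real.sqrt NS := by
  have h0 : 0 ≤ ξ*NS := by positivity
  have hsq : (Real.sqrt ξ * Real.sqrt NS)^2 = ξ*NS := by
    rw [mul_pow, Real.sq_sqrt hξ, Real.sq_sqrt hNS.le]
  have h1 : ξ*NS*(1+ξ*NS) ≤ (ξ*NS + Real.sqrt ξ * Real.sqrt NS)^2 := by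
    nlinarith [mul_nonneg h0 (mul_nonneg (Real.sqrt_nonneg ξ) (Real.sqrt_nonneg NS))]
  calc Real.sqrt (ξ*NS*(1+ξ*NS)) ≤ Real.sqrt ((ξ*NS + Real.sqrt ξ * Real.sqrt NS)^2) :=
      Real.sqrt_le_sqrt h1
    _ = _ := Real.sqrt_sq (by positivity)

lemma Dd_lb (hη1 : η < 1) (hη0 : 0 < η) (hNS : 0 < NS) (hξ : 0 ≤ ξ) :
    1 - η^2 ≤ Dd η NS ξ := by
  have h := sqrt_ub_half hNS hξ
  unfold Dd; nlinarith [sq_nonneg η]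

lemma Dd_ub (hη1 : η < 1) (hη0 : 0 < η) (hNS : 0 < NS) (hξ : 0 ≤ ξ) :
    Dd η NS ξ ≤ 1 := by
  have h := sqrt_lb hNS hξ
  unfold Dd; nlinarith [sq_nonneg η]

lemma Dd_pos (hη1 : η < 1) (hη0 : 0 < η) (hNS : 0 < NS) (hξ : 0 ≤ ξ) :
    0 < Dd η NS ξ := by
  have := Dd_lb hη1 hη0 hNS hξ; nlinarith

lemma Ee_lb (hη1 : η < 1) (hη0 : 0 < η) (hNS : 0 < NS) (hξ : 0 ≤ ξ) :
    1 - η^2 ≤ Ee η NS ξ := by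
  have h0 : 0 ≤ ξ*NS*η^2*(1-η^2)^2 := by positivity
  unfold Ee; nlinarith

lemma Ee_pos (hη1 : η < 1) (hη0 : 0 < η) (hNS : 0 < NS) (hξ : 0 ≤ ξ) :
    0 < Ee η NS ξ := by
  have := Ee_lb hη1 hη0 hNS hξ; nlinarith

lemma I0_eq : I0 η NS ξ = 4*NS*((1-ξ)/Dd η NS ξ + ξ*(Aa η)/Ee η NS ξ) := rfl

lemma hasDerivAt_I0 (hη1 : η < 1) (hη0 : 0 < η) (hNS : 0 < NS) (hξ : 0 < ξ) :
    HasDerivAt (fun t => I0 η NS t) (dI η NS ξ) ξ := by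
  have hfpos : 0 < ξ*NS*(1+ξ*NS) := by positivity
  have hu : HasDerivAt (fun t => t*NS*(1+t*NS)) (NS*(1+2*ξ*NS)) ξ := by
    have h1 := ((hasDerivAt_id ξ).mul_const NS).mul
      (((hasDerivAt_id ξ).mul_const NS).const_add 1)
    refine h1.congr_deriv ?_; simp only [id_eq]; ring
  have hs := hu.sqrt (ne_of_gt hfpos)
  have hD : HasDerivAt (fun t => Dd η NS t) (Dd' η NS ξ) ξ := by
    have h2 := ((hs.sub ((hasDerivAt_id ξ).mul_const NS)).mul_const (2*η^2)).const_sub 1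
    simp only [id_eq] at h2
    have hfun : (fun t => Dd η NS t)
        = (fun t => 1 - (Real.sqrt (t*NS*(1+t*NS)) - t*NS)*(2*η^2)) := by
      funext t; unfold Dd; ring
    rw [hfun]
    refine HasDerivAt.congr_deriv h2 ?_
    unfold Dd'; ring
  have hDne : Dd η NS ξ ≠ 0 := ne_of_gt (Dd_pos hη1 hη0 hNS hξ.le)
  have hEne : Ee η NS ξ ≠ 0 := ne_of_gt (Ee_pos hη1 hη0 hNS hξ.le)
  have hN1 : HasDerivAt (fun t : ℝ => 1 - t) (-1) ξ := by
    simpa using (hasDerivAt_id ξ).const_sub 1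
  have hf1 := hN1.div hD hDne
  have hE : HasDerivAt (fun t => Ee η NS t) (Ee' η NS) ξ := by
    have h5 := ((hasDerivAt_id ξ).mul_const ((1-η^2)*(2*NS*η^2*(1-η^2)))).const_add (1-η^2)
    simp only [id_eq, one_mul] at h5
    have hfun : (fun t => Ee η NS t)
        = (fun t : ℝ => (1-η^2) + t*((1-η^2)*(2*NS*η^2*(1-η^2)))) := by
      funext t; unfold Ee; ring
    rw [hfun]
    exact h5.congr_deriv rfl
  have hN2 : HasDerivAt (fun t : ℝ => t*(Aa η)) (Aa η) ξ := by
    simpa using (hasDerivAt_id ξ).mul_const (Aa η)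
  have hf2 := hN2.div hE hEne
  have hsum := (hf1.add hf2).const_mul (4*NS)
  have : (fun t => 4*NS*((1-t)/Dd η NS t + t*(Aa η)/Ee η NS t)) = fun t => I0 η NS t := by
    funext t; rw [I0_eq]
  simp only [Pi.add_apply, Pi.div_apply] at hsum
  rw [this] at hsum
  unfold dI
  exact hsum

end CSNO

namespace CSNO

variable {η NS ξ : ℝ}

noncomputable def Cc (η NS : ℝ) : ℝ :=
  4*NS*(1/(1-η^2) + 2*NS/(1-η^2)^2
    + η^2*Real.sqrt NS*(5*NS+1+4*Real.sqrt NS)/(1-η^2)^2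
    + Aa η/(1-η^2) + Aa η*Ee' η NS/(1-η^2)^2)

lemma algebra_id (NS ξ η a b c D E A P : ℝ) (hb2 : b^2 = NS) (ha : a ≠ 0)
    (hb : b ≠ 0) (hc : c ≠ 0) (hD : D ≠ 0) (hE : E ≠ 0) :
    4*NS*( ((-1)*D - (1-ξ)*(-((NS*(1+2*ξ*NS)/(2*(a*b*c)) - NS)*(2*η^2))))/D^2
      + (A*E - ξ*A*P)/E^2 ) - 4*NS*(b*η^2/a)
    = 4*NS*( (-(1/D) - 2*η^2*(1-ξ)*NS/D^2)
      + η^2*b/a * (((1-ξ)*(1+2*ξ*NS) - c*D^2)/(c*D^2))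
      + (A/E - ξ*A*P/E^2) ) := by
  subst hb2
  field_simp
  ring

lemma abs_neg_sub_le {x y bx byy : ℝ} (hx0 : 0 ≤ x) (hy0 : 0 ≤ y)
    (hx : x ≤ bx) (hy : y ≤ byy) : |(-x) - y| ≤ bx + byy := by
  rw [abs_le]; constructor <;> linarith

lemma abs_sub_le' {x y bx byy : ℝ} (hx0 : 0 ≤ x) (hy0 : 0 ≤ y)
    (hx : x ≤ bx) (hy : y ≤ byy) : |x - y| ≤ bx + byy := by
  rw [abs_le]; constructor <;> linarith

lemma aux_num1 {η ξ NS : ℝ} (hη2 : η^2 ≤ 1) (hξ0 : 0 < ξ) (hξ1 : ξ < 1)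
    (hNS : 0 < NS) : 2*η^2*(1-ξ)*NS ≤ 2*NS := by
  nlinarith [mul_nonneg hNS.le (by linarith : (0:ℝ) ≤ 1-η^2),
    mul_nonneg (mul_nonneg hNS.le (sq_nonneg η)) hξ0.le]

lemma aux_num2 {A P ξ : ℝ} (hA : 0 ≤ A) (hP : 0 ≤ P) (hξ1 : ξ < 1) :
    ξ*A*P ≤ A*P := by
  nlinarith [mul_nonneg (by linarith : (0:ℝ) ≤ 1-ξ) (mul_nonneg hA hP)]

set_option maxHeartbeats 1600000 in
lemma key_bound (hη1 : η < 1) (hη0 : 0 < η) (hNS : 0 < NS) (hξ0 : 0 < ξ) (hξ1 : ξ < 1) :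
    |dI η NS ξ - 4*NS*(Real.sqrt NS * η^2 / Real.sqrt ξ)| ≤ Cc η NS := by
  have hm : 0 < 1-η^2 := by nlinarith
  have hη2 : η^2 ≤ 1 := by nlinarith
  set a := Real.sqrt ξ with ha
  set b := Real.sqrt NS with hbb
  set c := Real.sqrt (1+ξ*NS) with hc
  have hapos : 0 < a := Real.sqrt_pos.mpr hξ0
  have hbpos : 0 < b := Real.sqrt_pos.mpr hNS
  have ha2 : a^2 = ξ := Real.sq_sqrt hξ0.le
  have hb2 : b^2 = NS := Real.sq_sqrt hNS.le
  have ha1 : a ≤ 1 := by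
    rw [ha, show (1:ℝ) = Real.sqrt 1 by simp]
    exact Real.sqrt_le_sqrt hξ1.le
  have hξa : ξ ≤ a := by nlinarith
  have hc1 : 1 ≤ c := by
    have h := Real.sqrt_le_sqrt (show (1:ℝ) ≤ 1+ξ*NS by nlinarith)
    rwa [Real.sqrt_one] at h
  have hcpos : 0 < c := lt_of_lt_of_le one_pos hc1
  have hcub : c ≤ 1+ξ*NS := by
    rw [hc]
    have h := Real.sqrt_le_sqrt (show 1+ξ*NS ≤ (1+ξ*NS)^2 by
      nlinarith [mul_nonneg hξ0.le hNS.le, sq_nonneg (ξ*NS)])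
    rwa [Real.sqrt_sq (by positivity)] at h
  have hsf : Real.sqrt (ξ*NS*(1+ξ*NS)) = a*b*c := by
    rw [Real.sqrt_mul (by positivity : (0:ℝ) ≤ ξ*NS), Real.sqrt_mul hξ0.le]
  clear_value a b c
  have hDlb := Dd_lb hη1 hη0 hNS hξ0.le
  have hDub := Dd_ub hη1 hη0 hNS hξ0.le
  have hDpos := Dd_pos hη1 hη0 hNS hξ0.le
  have hElb := Ee_lb hη1 hη0 hNS hξ0.le
  have hEpos := Ee_pos hη1 hη0 hNS hξ0.le
  have hD2le1 : (Dd η NS ξ)^2 ≤ 1 := by nlinarith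
  have hD2lb : (1-η^2)^2 ≤ (Dd η NS ξ)^2 := by nlinarith
  have hE2lb : (1-η^2)^2 ≤ (Ee η NS ξ)^2 := by nlinarith
  have hAnn : 0 < Aa η := by unfold Aa; positivity
  have hPnn : 0 ≤ Ee' η NS := by
    unfold Ee'
    nlinarith [mul_nonneg (mul_nonneg hNS.le (sq_nonneg η)) (sq_nonneg (1-η^2))]
  -- 1 - D^2 ≤ 4ab
  have h1 := sqrt_ub_sqrt hNS hξ0.le (NS := NS) (ξ := ξ)
  have h2 := sqrt_lb hNS hξ0.le (NS := NS) (ξ := ξ)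
  rw [← ha, ← hbb] at h1
  have hs1 : 1 - Dd η NS ξ ≤ 2*(a*b) := by
    have e1 : Real.sqrt (ξ*NS*(1+ξ*NS)) - ξ*NS ≤ a*b := by linarith
    have e2 : 0 ≤ Real.sqrt (ξ*NS*(1+ξ*NS)) - ξ*NS := by linarith
    have e3 : η^2*(Real.sqrt (ξ*NS*(1+ξ*NS)) - ξ*NS) ≤ a*b := by nlinarith
    unfold Dd
    nlinarith [e3]
  have h1D2 : 1 - (Dd η NS ξ)^2 ≤ 4*(a*b) := by
    nlinarith [hs1, sq_nonneg (1 - Dd η NS ξ), mul_nonneg hapos.le hbpos.le]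
  -- the identity
  have hId : dI η NS ξ - 4*NS*(b*η^2/a)
      = 4*NS*( (-(1/Dd η NS ξ) - 2*η^2*(1-ξ)*NS/(Dd η NS ξ)^2)
        + η^2*b/a * (((1-ξ)*(1+2*ξ*NS) - c*(Dd η NS ξ)^2)/(c*(Dd η NS ξ)^2))
        + (Aa η/Ee η NS ξ - ξ*Aa η*Ee' η NS/(Ee η NS ξ)^2) ) := by
    unfold dI Dd'
    rw [hsf]
    exact algebra_id NS ξ η a b c (Dd η NS ξ) (Ee η NS ξ) (Aa η) (Ee' η NS) hb2
      (ne_of_gt hapos) (ne_of_gt hbpos) (ne_of_gt hcpos) (ne_of_gt hDpos) (ne_of_gt hEpos)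
  -- T1 bound
  have h1T : 1/(Dd η NS ξ) ≤ 1/(1-η^2) := one_div_le_one_div_of_le hm hDlb
  have h2T : 2*η^2*(1-ξ)*NS/(Dd η NS ξ)^2 ≤ 2*NS/(1-η^2)^2 := by
    apply div_le_div₀ (by positivity) (aux_num1 hη2 hξ0 hξ1 hNS) (by positivity) hD2lb
  have h3T : 0 ≤ 1/(Dd η NS ξ) := by positivity
  have h4T : 0 ≤ 2*η^2*(1-ξ)*NS/(Dd η NS ξ)^2 :=
    div_nonneg (mul_nonneg (mul_nonneg (by positivity) (by linarith)) hNS.le)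
      (by positivity)
  have hb1 : |(-(1/Dd η NS ξ) - 2*η^2*(1-ξ)*NS/(Dd η NS ξ)^2)|
      ≤ 1/(1-η^2) + 2*NS/(1-η^2)^2 :=
    abs_neg_sub_le h3T h4T h1T h2T
  -- T2 bound
  have hcD2lb : (1-η^2)^2 ≤ c*(Dd η NS ξ)^2 := by nlinarith
  have hcD2pos : 0 < c*(Dd η NS ξ)^2 := by positivity
  have hBub : |(1-ξ)*(1+2*ξ*NS) - c*(Dd η NS ξ)^2| ≤ a*(5*NS+1+4*b) := by
    rw [abs_le]
    constructor
    · nlinarith [mul_nonneg (by linarith : (0:ℝ) ≤ c-1) (sq_nonneg (Dd η NS ξ)),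
        mul_nonneg (by linarith : (0:ℝ) ≤ a-ξ) hNS.le,
        mul_nonneg hξ0.le (mul_nonneg hξ0.le hNS.le),
        mul_nonneg hapos.le hbpos.le]
    · nlinarith [mul_nonneg (by linarith : (0:ℝ) ≤ c)
        (by linarith : (0:ℝ) ≤ 1 - (Dd η NS ξ)^2),
        mul_nonneg (by linarith : (0:ℝ) ≤ a-ξ) hNS.le,
        mul_nonneg hξ0.le (mul_nonneg hξ0.le hNS.le),
        mul_nonneg hapos.le hbpos.le]
  have hb2' : |η^2*b/a * (((1-ξ)*(1+2*ξ*NS) - c*(Dd η NS ξ)^2)/(c*(Dd η NS ξ)^2))|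
      ≤ η^2*b*(5*NS+1+4*b)/(1-η^2)^2 := by
    rw [abs_mul, abs_of_nonneg (by positivity : (0:ℝ) ≤ η^2*b/a), abs_div,
      abs_of_pos hcD2pos]
    calc η^2*b/a * (|(1-ξ)*(1+2*ξ*NS) - c*(Dd η NS ξ)^2|/(c*(Dd η NS ξ)^2))
        ≤ η^2*b/a * ((a*(5*NS+1+4*b))/(1-η^2)^2) := by
          apply mul_le_mul_of_nonneg_left _ (by positivity)
          exact div_le_div₀ (by positivity) hBub (by positivity) hcD2lb
      _ = η^2*b*(5*NS+1+4*b)/(1-η^2)^2 := by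
          field_simp
  -- T3 bound
  have h5T : Aa η/Ee η NS ξ ≤ Aa η/(1-η^2) := div_le_div₀ hAnn.le le_rfl hm hElb
  have h6T : ξ*Aa η*Ee' η NS/(Ee η NS ξ)^2 ≤ Aa η*Ee' η NS/(1-η^2)^2 := by
    apply div_le_div₀ (by positivity) (aux_num2 hAnn.le hPnn hξ1) (by positivity) hE2lb
  have h7T : 0 ≤ Aa η/Ee η NS ξ := by positivity
  have h8T : 0 ≤ ξ*Aa η*Ee' η NS/(Ee η NS ξ)^2 := by positivity
  have hb3 : |Aa η/Ee η NS ξ - ξ*Aa η*Ee' η NS/(Ee η NS ξ)^2|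
      ≤ Aa η/(1-η^2) + Aa η*Ee' η NS/(1-η^2)^2 :=
    abs_sub_le' h7T h8T h5T h6T
  -- assemble
  rw [hId, abs_mul, abs_of_nonneg (show (0:ℝ) ≤ 4*NS by positivity)]
  have htri : |(-(1/Dd η NS ξ) - 2*η^2*(1-ξ)*NS/(Dd η NS ξ)^2)
        + η^2*b/a * (((1-ξ)*(1+2*ξ*NS) - c*(Dd η NS ξ)^2)/(c*(Dd η NS ξ)^2))
        + (Aa η/Ee η NS ξ - ξ*Aa η*Ee' η NS/(Ee η NS ξ)^2)|
      ≤ (1/(1-η^2) + 2*NS/(1-η^2)^2) + η^2*b*(5*NS+1+4*b)/(1-η^2)^2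
        + (Aa η/(1-η^2) + Aa η*Ee' η NS/(1-η^2)^2) := by
    refine le_trans (abs_add_le _ _) ?_
    exact add_le_add (le_trans (abs_add_le _ _) (add_le_add hb1 hb2')) hb3
  calc 4*NS*|(-(1/Dd η NS ξ) - 2*η^2*(1-ξ)*NS/(Dd η NS ξ)^2)
        + η^2*b/a * (((1-ξ)*(1+2*ξ*NS) - c*(Dd η NS ξ)^2)/(c*(Dd η NS ξ)^2))
        + (Aa η/Ee η NS ξ - ξ*Aa η*Ee' η NS/(Ee η NS ξ)^2)|
      ≤ 4*NS*((1/(1-η^2) + 2*NS/(1-η^2)^2) + η^2*b*(5*NS+1+4*b)/(1-η^2)^2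
        + (Aa η/(1-η^2) + Aa η*Ee' η NS/(1-η^2)^2)) :=
        mul_le_mul_of_nonneg_left htri (by positivity)
    _ = Cc η NS := by unfold Cc; rw [← hbb]; ring


end CSNO

namespace CSNO

variable {η NS ξ : ℝ}

lemma contOn (hη1 : η < 1) (hη0 : 0 < η) (hNS : 0 < NS) :
    ContinuousOn (fun ξ => I0 η NS ξ) (Set.Ici 0) := by
  have hcD : Continuous (fun ξ : ℝ => Dd η NS ξ) := by
    unfold Dd
    have : Continuous (fun ξ : ℝ => Real.sqrt (ξ*NS*(1+ξ*NS))) :=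
      Continuous.sqrt (by continuity)
    continuity
  have hcE : Continuous (fun ξ : ℝ => Ee η NS ξ) := by unfold Ee; continuity
  have h1 : ContinuousOn (fun ξ : ℝ => (1-ξ)/Dd η NS ξ) (Set.Ici 0) :=
    ContinuousOn.div (by fun_prop) hcD.continuousOn
      (fun x hx => ne_of_gt (Dd_pos hη1 hη0 hNS hx))
  have h2 : ContinuousOn (fun ξ : ℝ => ξ*(Aa η)/Ee η NS ξ) (Set.Ici 0) :=
    ContinuousOn.div (by fun_prop) hcE.continuousOn
      (fun x hx => ne_of_gt (Ee_pos hη1 hη0 hNS hx))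
  have : ContinuousOn (fun ξ : ℝ => 4*NS*((1-ξ)/Dd η NS ξ + ξ*(Aa η)/Ee η NS ξ))
      (Set.Ici 0) := ContinuousOn.mul continuousOn_const (h1.add h2)
  exact this

lemma ev_bound (hη1 : η < 1) (hη0 : 0 < η) (hNS : 0 < NS) :
    ∀ᶠ ξ in nhdsWithin 0 (Set.Ioi 0),
      |deriv (fun ξ => I0 η NS ξ) ξ - 4*NS*(Real.sqrt NS * η^2 / Real.sqrt ξ)|
        ≤ Cc η NS := by
  have h01 : Set.Ioo (0:ℝ) 1 ∈ nhdsWithin 0 (Set.Ioi 0) :=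
    Ioo_mem_nhdsGT_of_mem (by constructor <;> norm_num)
  filter_upwards [h01] with ξ hξ
  rw [(hasDerivAt_I0 hη1 hη0 hNS hξ.1).deriv]
  exact key_bound hη1 hη0 hNS hξ.1 hξ.2

lemma tendsto_main (hη0 : 0 < η) (hNS : 0 < NS) :
    Filter.Tendsto (fun ξ => 4*NS*(Real.sqrt NS * η^2 / Real.sqrt ξ))
      (nhdsWithin 0 (Set.Ioi 0)) Filter.atTop := by
  have h1 : Filter.Tendsto (fun ξ : ℝ => Real.sqrt ξ) (nhdsWithin 0 (Set.Ioi 0))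
      (nhdsWithin 0 (Set.Ioi 0)) := by
    apply tendsto_nhdsWithin_of_tendsto_nhds_of_eventually_within
    · have h0 := (Real.continuous_sqrt.tendsto 0).mono_left
        (nhdsWithin_le_nhds (s := Set.Ioi (0:ℝ)))
      simpa using h0
    · filter_upwards [self_mem_nhdsWithin] with x hx
      exact Real.sqrt_pos.mpr hx
  have h2 := tendsto_inv_nhdsGT_zero.comp h1
  have h3 := h2.atTop_mul_const (show (0:ℝ) < 4*NS*(Real.sqrt NS*η^2) by positivity)
  refine h3.congr (fun x => ?_)
  simp only [Function.comp]
  rw [div_eq_mul_inv]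
  ring

end CSNO

theorem coherent_state_not_optimal (η NS : ℝ) (hη0 : 0 < η) (hη1 : η < 1)
    (hNS : 0 < NS) :
    (∃ C : ℝ, ∀ᶠ ξ in nhdsWithin 0 (Set.Ioi 0),
      |deriv (fun ξ => I0 η NS ξ) ξ - 4*NS*(Real.sqrt NS * η^2 / Real.sqrt ξ)| ≤ C) ∧
    Filter.Tendsto (deriv (fun ξ => I0 η NS ξ)) (nhdsWithin 0 (Set.Ioi 0)) Filter.atTop ∧
    ¬ IsMaxOn (fun ξ => I0 η NS ξ) (Set.Icc 0 1) 0 := by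
  have hCb := CSNO.ev_bound hη1 hη0 hNS
  have htd : Filter.Tendsto (deriv (fun ξ => I0 η NS ξ)) (nhdsWithin 0 (Set.Ioi 0))
      Filter.atTop := by
    refine Filter.tendsto_atTop_mono' _ ?_
      (Filter.tendsto_atTop_add_const_right _ (-(CSNO.Cc η NS))
        (CSNO.tendsto_main hη0 hNS))
    filter_upwards [hCb] with ξ h
    have h' := (abs_le.mp h).1
    linarith
  refine ⟨⟨CSNO.Cc η NS, hCb⟩, htd, ?_⟩
  intro hmax
  have hpos : ∀ᶠ ξ in nhdsWithin 0 (Set.Ioi 0), 0 < deriv (fun ξ => I0 η NS ξ) ξ :=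
    htd.eventually (Filter.eventually_gt_atTop 0)
  obtain ⟨u, hu, hsub⟩ := mem_nhdsGT_iff_exists_Ioo_subset.mp hpos
  have hu0 : 0 < u := Set.mem_Ioi.mp hu
  set bb := min (u/2) (1/2) with hbdef
  have hb0 : 0 < bb := lt_min (by linarith) (by norm_num)
  have hbu : bb < u := lt_of_le_of_lt (min_le_left _ _) (by linarith)
  have hb1 : bb ≤ 1 := le_trans (min_le_right _ _) (by norm_num)
  have hmono : StrictMonoOn (fun ξ => I0 η NS ξ) (Set.Icc 0 bb) := by
    apply strictMonoOn_of_deriv_pos (convex_Icc 0 bb)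
    · exact (CSNO.contOn hη1 hη0 hNS).mono Set.Icc_subset_Ici_self
    · intro x hx
      rw [interior_Icc] at hx
      exact hsub ⟨hx.1, lt_trans hx.2 hbu⟩
  have hlt : I0 η NS 0 < I0 η NS bb :=
    hmono ⟨le_rfl, hb0.le⟩ ⟨hb0.le, le_rfl⟩ hb0
  have hle := (isMaxOn_iff.mp hmax) bb ⟨hb0.le, hb1⟩
  linarith
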